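/- Let R be a weakly Baer reduced ring and a, b ∈ R. Then a ∧_rr b exists and equals ea = eb, where e is the idempotent with ann(a − b) = eR. Moreover, for any central non-zero-divisor s, (as) ∧_rr (bs) = (a ∧_rr b)s. -/
import Mathlib

private lemma swap_zero {R : Type*} [Ring R] [IsReduced R] {x y : R}
    (h : x * y = 0) : y * x = 0 := by
  refine IsReduced.eq_zero _ ⟨2, ?_⟩
  rw [pow_two, mul_assoc, ← mul_assoc x, h, zero_mul, mul_zero]

private lemma idem_central {R : Type*} [Ring R] [IsReduced R] {e : R}
    (he : e * e = e) (x : R) : e * x = x * e := by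
  have h1 : e * x - e * x * e = 0 := by
    refine IsReduced.eq_zero _ ⟨2, ?_⟩
    rw [pow_two]
    have : (e * x - e * x * e) * (e * x - e * x * e) = 0 := by
      have expand : (e * x - e * x * e) * (e * x - e * x * e)
          = e*x*(e*x) - e*x*(e*x*e) - e*x*(e*(e*x)) + e*x*(e*(e*(x*e))) := by
        noncomm_ring
      rw [expand]
      have h2 : e*(e*x) = e*x := by rw [← mul_assoc, he]
      have h3 : e*(e*(x*e)) = e*x*e := by rw [← mul_assoc, he, ← mul_assoc]
      rw [h2, h3]
      abel
    exact this
  have h2 : x * e - e * x * e = 0 := by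
    refine IsReduced.eq_zero _ ⟨2, ?_⟩
    rw [pow_two]
    have expand : (x * e - e * x * e) * (x * e - e * x * e)
        = x*(e*(x*e)) - x*(e*(e*(x*e))) - e*x*(e*(x*e)) + e*x*(e*(e*(x*e))) := by
      noncomm_ring
    rw [expand]
    have h3 : e*(e*(x*e)) = e*(x*e) := by rw [← mul_assoc, he]
    rw [h3]
    abel
  rw [sub_eq_zero] at h1 h2
  exact h1.trans h2.symm

/-- In a weakly Baer reduced ring, `a ∧rr b = ea = eb` where `ann(a-b) = eR`,
and rr-infima distribute over multiplication by central non-zero-divisors. -/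
theorem stmt_14 {R : Type*} [Ring R] [IsReduced R]
    (hwB : ∀ x : R, ∃ e : R, e * e = e ∧ ∀ y : R, x * y = 0 ↔ ∃ r : R, y = e * r)
    (a b : R) :
    ∃ e : R, e * e = e ∧ (∀ y : R, (a - b) * y = 0 ↔ ∃ r : R, y = e * r) ∧
      e * a = e * b ∧
      ((e * a) * (e * a) = (e * a) * a ∧ (e * a) * (e * a) = (e * a) * b ∧
        ∀ d : R, d * d = d * a → d * d = d * b → d * d = d * (e * a)) ∧
      ∀ s : R, (∀ r : R, s * r = r * s) → (∀ x : R, s * x = 0 → x = 0) →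
        ((e * a * s) * (e * a * s) = (e * a * s) * (a * s) ∧
          (e * a * s) * (e * a * s) = (e * a * s) * (b * s) ∧
          ∀ d : R, d * d = d * (a * s) → d * d = d * (b * s) →
            d * d = d * (e * a * s)) := by
  obtain ⟨e, he, hann⟩ := hwB (a - b)
  have hc := idem_central he
  -- e annihilates a - b
  have he0 : (a - b) * e = 0 := by
    exact ((hann e).mpr ⟨e, he.symm⟩)
  have he0' : e * (a - b) = 0 := by rw [hc]; exact he0
  have heab : e * a = e * b := by
    have := he0'
    rw [mul_sub, sub_eq_zero] at this
    exact this
  -- key: (e*a)*(a-b) = 0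
  have hkey : e * a * (a - b) = 0 := by
    rw [hc a, mul_assoc, he0', mul_zero]
  have h1 : (e * a) * (e * a) = (e * a) * a := by
    rw [← mul_assoc (e*a) e a, mul_assoc e a e, ← hc a, ← mul_assoc e e a, he]
  have h2 : (e * a) * (e * a) = (e * a) * b := by
    rw [h1]
    have := hkey
    rw [mul_sub, sub_eq_zero] at this
    exact this
  -- infimum property
  have hinf : ∀ d : R, d * d = d * a → d * d = d * b → d * d = d * (e * a) := by
    intro d hda hdb
    have hd0 : d * (a - b) = 0 := by rw [mul_sub, sub_eq_zero, ← hda, ← hdb]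
    have hd0' : (a - b) * d = 0 := swap_zero hd0
    obtain ⟨r, hr⟩ := (hann d).mp hd0'
    have hde : d * e = d := by
      rw [hr, ← hc, ← mul_assoc, he]
    rw [← mul_assoc, hde, hda]
  refine ⟨e, he, hann, heab, ⟨h1, h2, hinf⟩, ?_⟩
  intro s hs hreg
  have lhs : (e * a * s) * (e * a * s) = (e * a * a) * (s * s) := by
    rw [mul_assoc (e*a) s (e*a*s), hs (e*a*s), mul_assoc (e*a) s s,
        ← mul_assoc (e*a) (e*a) (s*s), h1]
  have rhsa : (e * a * s) * (a * s) = (e * a * a) * (s * s) := by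
    rw [mul_assoc (e*a) s (a*s), hs (a*s), mul_assoc a s s, ← mul_assoc (e*a) a (s*s)]
  have rhsb : (e * a * s) * (b * s) = (e * a * b) * (s * s) := by
    rw [mul_assoc (e*a) s (b*s), hs (b*s), mul_assoc b s s, ← mul_assoc (e*a) b (s*s)]
  have hs1 : (e * a * s) * (e * a * s) = (e * a * s) * (a * s) := lhs.trans rhsa.symm
  have hs2 : (e * a * s) * (e * a * s) = (e * a * s) * (b * s) := by
    rw [lhs, rhsb, ← h1, h2]
  refine ⟨hs1, hs2, ?_⟩
  intro d hda hdb
  have hd0 : d * (a - b) * s = 0 := by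
    rw [mul_sub, sub_mul, mul_assoc, mul_assoc, sub_eq_zero, ← hda, ← hdb]
  have hd0' : d * (a - b) = 0 := by
    apply hreg
    rw [hs (d * (a-b))]; exact hd0
  have hd0'' : (a - b) * d = 0 := swap_zero hd0'
  obtain ⟨r, hr⟩ := (hann d).mp hd0''
  have hde : d * e = d := by rw [hr, ← hc, ← mul_assoc, he]
  rw [mul_assoc e a s, ← mul_assoc d e (a*s), hde, ← hda]
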